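/- arXiv:2009.06723 — 2 statements merged into one kernel-verified Lean document; each statement's English description precedes it below -/
import Mathlib

section
/- The graph-adaptive max activation function is Lipschitz stable in the infinity norm: if z and z̃ denote its outputs on inputs x and x̃ respectively, then ‖z̃ − z‖_∞ ≤ (|β| + K·C·max_{1≤k≤K} ‖S^k‖_∞) · ‖x̃ − x‖_∞. -/
open Matrix

/-- infinity norm of a vector -/
noncomputable def vnorm {N : ℕ} [NeZero N] (v : Fin N → ℝ) : ℝ :=
  Finset.univ.sup' Finset.univ_nonempty fun i => |v i|

/-- operator infinity norm of a matrix: maximum absolute row sum -/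
noncomputable def mnorm {N : ℕ} [NeZero N] (A : Matrix (Fin N) (Fin N) ℝ) : ℝ :=
  Finset.univ.sup' Finset.univ_nonempty fun i => ∑ j, |A i j|

lemma le_vnorm {N : ℕ} [NeZero N] (v : Fin N → ℝ) (i : Fin N) : |v i| ≤ vnorm v := by
  unfold vnorm; exact Finset.le_sup' (fun i => |v i|) (Finset.mem_univ i)

lemma le_mnorm {N : ℕ} [NeZero N] (A : Matrix (Fin N) (Fin N) ℝ) (i : Fin N) :
    (∑ j, |A i j|) ≤ mnorm A := by
  unfold mnorm; exact Finset.le_sup' (fun i => ∑ j, |A i j|) (Finset.mem_univ i)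

lemma vnorm_nonneg {N : ℕ} [NeZero N] (v : Fin N → ℝ) : 0 ≤ vnorm v := by
  obtain ⟨i⟩ := Fin.pos_iff_nonempty.mp (NeZero.pos N)
  exact le_trans (abs_nonneg (v i)) (le_vnorm v i)

lemma abs_sup'_sub_sup' {α : Type*} (s : Finset α) (hs : s.Nonempty) (f g : α → ℝ) :
    |s.sup' hs f - s.sup' hs g| ≤ s.sup' hs (fun j => |f j - g j|) := by
  rw [abs_sub_le_iff]
  constructor
  · rw [sub_le_iff_le_add]
    apply Finset.sup'_le
    intro j hj
    calc f j = (f j - g j) + g j := by ring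
    _ ≤ s.sup' hs (fun j => |f j - g j|) + s.sup' hs g :=
      add_le_add (le_trans (le_abs_self _) (Finset.le_sup' (fun j => |f j - g j|) hj))
        (Finset.le_sup' g hj)
  · rw [sub_le_iff_le_add]
    apply Finset.sup'_le
    intro j hj
    calc g j = -(f j - g j) + f j := by ring
    _ ≤ s.sup' hs (fun j => |f j - g j|) + s.sup' hs f :=
      add_le_add (le_trans (neg_le_abs _) (Finset.le_sup' (fun j => |f j - g j|) hj))
        (Finset.le_sup' f hj)

lemma mulVec_entry_le {N : ℕ} [NeZero N] (A : Matrix (Fin N) (Fin N) ℝ) (v : Fin N → ℝ)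
    (i : Fin N) : |(A *ᵥ v) i| ≤ mnorm A * vnorm v := by
  calc |(A *ᵥ v) i| = |∑ j, A i j * v j| := rfl
  _ ≤ ∑ j, |A i j * v j| := Finset.abs_sum_le_sum_abs _ _
  _ = ∑ j, |A i j| * |v j| := by simp [abs_mul]
  _ ≤ ∑ j, |A i j| * vnorm v := by
      apply Finset.sum_le_sum
      intro j _
      exact mul_le_mul_of_nonneg_left (le_vnorm v j) (abs_nonneg _)
  _ = (∑ j, |A i j|) * vnorm v := by rw [Finset.sum_mul]
  _ ≤ mnorm A * vnorm v :=
      mul_le_mul_of_nonneg_right (le_mnorm A i) (vnorm_nonneg v)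

theorem graph_adaptive_max_lipschitz (N K : ℕ) [NeZero N] [NeZero K]
    (S : Matrix (Fin N) (Fin N) ℝ)
    (Nb : Fin N → Finset (Fin N)) (hNb : ∀ i, (Nb i).Nonempty)
    (β C : ℝ) (h : Fin K → ℝ) (hC : ∀ k, |h k| ≤ C)
    (x xt : Fin N → ℝ)
    (z zt : Fin N → ℝ)
    (hz : ∀ i, z i = β * max 0 (x i) +
      ∑ k : Fin K, h k * (Nb i).sup' (hNb i) (fun j => (S ^ ((k : ℕ) + 1) *ᵥ x) j))
    (hzt : ∀ i, zt i = β * max 0 (xt i) +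
      ∑ k : Fin K, h k * (Nb i).sup' (hNb i) (fun j => (S ^ ((k : ℕ) + 1) *ᵥ xt) j)) :
    vnorm (zt - z) ≤
      (|β| + K * C * Finset.univ.sup' Finset.univ_nonempty
        (fun k : Fin K => mnorm (S ^ ((k : ℕ) + 1)))) * vnorm (xt - x) := by
  set M := Finset.univ.sup' Finset.univ_nonempty
        (fun k : Fin K => mnorm (S ^ ((k : ℕ) + 1))) with hM
  have hC0 : 0 ≤ C := le_trans (abs_nonneg _) (hC ⟨0, NeZero.pos K⟩)
  have hd0 := vnorm_nonneg (xt - x)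
  show Finset.univ.sup' _ (fun i => |(zt - z) i|) ≤ _
  apply Finset.sup'_le
  intro i _
  have hmax : |max 0 (xt i) - max 0 (x i)| ≤ vnorm (xt - x) := by
    refine le_trans ?_ (le_vnorm (xt - x) i)
    simp only [Pi.sub_apply]
    rw [max_comm 0 (xt i), max_comm 0 (x i)]
    exact abs_max_sub_max_le_abs (xt i) (x i) 0
  have hterm : ∀ k : Fin K,
      |h k * ((Nb i).sup' (hNb i) (fun j => (S ^ ((k : ℕ) + 1) *ᵥ xt) j)
        - (Nb i).sup' (hNb i) (fun j => (S ^ ((k : ℕ) + 1) *ᵥ x) j))|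
      ≤ C * (M * vnorm (xt - x)) := by
    intro k
    rw [abs_mul]
    have h1 : |(Nb i).sup' (hNb i) (fun j => (S ^ ((k : ℕ) + 1) *ᵥ xt) j)
        - (Nb i).sup' (hNb i) (fun j => (S ^ ((k : ℕ) + 1) *ᵥ x) j)|
        ≤ M * vnorm (xt - x) := by
      refine le_trans (abs_sup'_sub_sup' _ _ _ _) ?_
      apply Finset.sup'_le
      intro j _
      have : (S ^ ((k : ℕ) + 1) *ᵥ xt) j - (S ^ ((k : ℕ) + 1) *ᵥ x) j
          = (S ^ ((k : ℕ) + 1) *ᵥ (xt - x)) j := by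
        rw [mulVec_sub]; rfl
      rw [this]
      refine le_trans (mulVec_entry_le _ _ _) ?_
      exact mul_le_mul_of_nonneg_right
        (hM ▸ Finset.le_sup' (fun k : Fin K => mnorm (S ^ ((k : ℕ) + 1))) (Finset.mem_univ k)) hd0
    exact mul_le_mul (hC k) h1 (abs_nonneg _) hC0
  have heq : |(zt - z) i| = |β * (max 0 (xt i) - max 0 (x i)) +
      ∑ k : Fin K, h k * ((Nb i).sup' (hNb i) (fun j => (S ^ ((k : ℕ) + 1) *ᵥ xt) j)
        - (Nb i).sup' (hNb i) (fun j => (S ^ ((k : ℕ) + 1) *ᵥ x) j))| := by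
    rw [Pi.sub_apply, hz i, hzt i]
    congr 1
    simp only [mul_sub, Finset.sum_sub_distrib]
    ring
  calc |(zt - z) i| = |β * (max 0 (xt i) - max 0 (x i)) +
      ∑ k : Fin K, h k * ((Nb i).sup' (hNb i) (fun j => (S ^ ((k : ℕ) + 1) *ᵥ xt) j)
        - (Nb i).sup' (hNb i) (fun j => (S ^ ((k : ℕ) + 1) *ᵥ x) j))| := heq
  _ ≤ |β * (max 0 (xt i) - max 0 (x i))| +
      |∑ k : Fin K, h k * ((Nb i).sup' (hNb i) (fun j => (S ^ ((k : ℕ) + 1) *ᵥ xt) j)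
        - (Nb i).sup' (hNb i) (fun j => (S ^ ((k : ℕ) + 1) *ᵥ x) j))| := abs_add_le _ _
  _ ≤ |β| * vnorm (xt - x) + ∑ k : Fin K, C * (M * vnorm (xt - x)) := by
      refine add_le_add ?_ (le_trans (Finset.abs_sum_le_sum_abs _ _)
        (Finset.sum_le_sum fun k _ => hterm k))
      rw [abs_mul]
      exact mul_le_mul_of_nonneg_left hmax (abs_nonneg _)
  _ = (|β| + K * C * M) * vnorm (xt - x) := by
      rw [Finset.sum_const, Finset.card_univ, Fintype.card_fin, nsmul_eq_mul]
      ring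
end

section
/- A single-layer GCNN with graph-adaptive max activation is permutation equivariant: Φ(Pᵀx; PᵀSP) = Pᵀ Φ(x; S), where Φ(x; S)_i = β·ReLU((H(S)x)_i) + Σ_{k=1}^{K} h_{σk}·max{ (S^k H(S)x)_j : j ∈ N_i }, and neighborhoods are relabeled consistently with the permutation. -/
open Matrix

/-- Neighborhood of node `i`: off-diagonal support of row `i` of the shift operator. -/
noncomputable def nbhd {N : ℕ} (S : Matrix (Fin N) (Fin N) ℝ) (i : Fin N) : Finset (Fin N) :=
  Finset.univ.filter (fun j => j ≠ i ∧ S i j ≠ 0)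

/-- Single-layer GCNN with graph-adaptive max activation. -/
noncomputable def Phi {N K : ℕ} (S : Matrix (Fin N) (Fin N) ℝ)
    (hne : ∀ i, (nbhd S i).Nonempty) (h : Fin (K + 1) → ℝ) (β : ℝ) (hσ : Fin K → ℝ)
    (x : Fin N → ℝ) : Fin N → ℝ := fun i =>
  β * max 0 ((∑ k : Fin (K + 1), h k • (S ^ (k : ℕ) *ᵥ x)) i) +
    ∑ k : Fin K, hσ k * (nbhd S i).sup' (hne i)
      (fun j => (S ^ ((k : ℕ) + 1) *ᵥ (∑ k' : Fin (K + 1), h k' • (S ^ (k' : ℕ) *ᵥ x))) j)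

section aux

variable {N : ℕ} (σ : Equiv.Perm (Fin N))

lemma permMatrix_transpose :
    (σ.permMatrix ℝ)ᵀ = (σ⁻¹).permMatrix ℝ := by
  rw [← PEquiv.toMatrix_symm, ← Equiv.toPEquiv_symm]
  rfl

lemma permMatrix_mul_transpose :
    (σ.permMatrix ℝ) * (σ.permMatrix ℝ)ᵀ = 1 := by
  rw [permMatrix_transpose, ← PEquiv.toMatrix_trans, ← Equiv.toPEquiv_trans]
  ext a b
  simp [PEquiv.toMatrix_apply, Equiv.toPEquiv_apply, Matrix.one_apply, eq_comm]

lemma transpose_mul_permMatrix :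
    (σ.permMatrix ℝ)ᵀ * (σ.permMatrix ℝ) = 1 := by
  rw [permMatrix_transpose, ← PEquiv.toMatrix_trans, ← Equiv.toPEquiv_trans]
  ext a b
  simp [PEquiv.toMatrix_apply, Equiv.toPEquiv_apply, Matrix.one_apply, eq_comm]

lemma permMatrixT_mulVec (v : Fin N → ℝ) (i : Fin N) :
    ((σ.permMatrix ℝ)ᵀ *ᵥ v) i = v (σ⁻¹ i) := by
  rw [permMatrix_transpose]
  simp only [mulVec, dotProduct, PEquiv.toMatrix_apply, Equiv.toPEquiv_apply,
    Option.mem_def, Option.some.injEq]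
  rw [Finset.sum_eq_single (σ⁻¹ i)] <;> simp (config := {contextual := true}) [eq_comm]

lemma permConj_apply (S : Matrix (Fin N) (Fin N) ℝ) (i j : Fin N) :
    ((σ.permMatrix ℝ)ᵀ * S * (σ.permMatrix ℝ)) i j = S (σ⁻¹ i) (σ⁻¹ j) := by
  rw [permMatrix_transpose, PEquiv.toMatrix_toPEquiv_mul, PEquiv.mul_toMatrix_toPEquiv]
  rfl

lemma permConj_pow (S : Matrix (Fin N) (Fin N) ℝ) (k : ℕ) :
    ((σ.permMatrix ℝ)ᵀ * S * (σ.permMatrix ℝ)) ^ k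
      = (σ.permMatrix ℝ)ᵀ * S ^ k * (σ.permMatrix ℝ) := by
  induction k with
  | zero => rw [pow_zero, pow_zero, Matrix.mul_one, transpose_mul_permMatrix]
  | succ n ih =>
      rw [pow_succ, ih, pow_succ]
      calc (σ.permMatrix ℝ)ᵀ * S ^ n * (σ.permMatrix ℝ)
            * ((σ.permMatrix ℝ)ᵀ * S * (σ.permMatrix ℝ))
          = (σ.permMatrix ℝ)ᵀ * S ^ n
            * ((σ.permMatrix ℝ) * (σ.permMatrix ℝ)ᵀ) * S * (σ.permMatrix ℝ) := by
            simp only [Matrix.mul_assoc]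
        _ = (σ.permMatrix ℝ)ᵀ * (S ^ n * S) * (σ.permMatrix ℝ) := by
            rw [permMatrix_mul_transpose]
            simp only [Matrix.mul_assoc, Matrix.one_mul]

lemma permConj_pow_mulVec (S : Matrix (Fin N) (Fin N) ℝ) (k : ℕ) (v : Fin N → ℝ) (i : Fin N) :
    (((σ.permMatrix ℝ)ᵀ * S * (σ.permMatrix ℝ)) ^ k *ᵥ ((σ.permMatrix ℝ)ᵀ *ᵥ v)) i
      = (S ^ k *ᵥ v) (σ⁻¹ i) := by
  have hv : (σ.permMatrix ℝ) *ᵥ ((σ.permMatrix ℝ)ᵀ *ᵥ v) = v := by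
    rw [Matrix.mulVec_mulVec, permMatrix_mul_transpose, Matrix.one_mulVec]
  rw [permConj_pow, ← Matrix.mulVec_mulVec, hv, ← Matrix.mulVec_mulVec, permMatrixT_mulVec]

lemma nbhd_conj (S : Matrix (Fin N) (Fin N) ℝ) (i : Fin N) :
    nbhd ((σ.permMatrix ℝ)ᵀ * S * (σ.permMatrix ℝ)) i
      = (nbhd S (σ⁻¹ i)).image σ := by
  ext j
  simp only [nbhd, Finset.mem_filter, Finset.mem_univ, true_and, Finset.mem_image,
    permConj_apply]
  constructor
  · rintro ⟨hj, hS⟩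
    refine ⟨σ⁻¹ j, ⟨?_, hS⟩, Equiv.apply_symm_apply σ j⟩
    intro hc
    exact hj (by simpa using congrArg σ hc)
  · rintro ⟨a, ⟨ha, hS⟩, rfl⟩
    refine ⟨?_, by simpa using hS⟩
    intro hc
    exact ha (by rw [← hc]; simp)

end aux

theorem gcnn_graph_adaptive_max_perm_equivariant (N K : ℕ)
    (S : Matrix (Fin N) (Fin N) ℝ) (hne : ∀ i, (nbhd S i).Nonempty)
    (h : Fin (K + 1) → ℝ) (β : ℝ) (hσ : Fin K → ℝ)
    (σ : Equiv.Perm (Fin N)) (x : Fin N → ℝ)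
    (hne' : ∀ i, (nbhd ((σ.permMatrix ℝ)ᵀ * S * (σ.permMatrix ℝ)) i).Nonempty) :
    Phi ((σ.permMatrix ℝ)ᵀ * S * (σ.permMatrix ℝ)) hne' h β hσ ((σ.permMatrix ℝ)ᵀ *ᵥ x) =
      (σ.permMatrix ℝ)ᵀ *ᵥ Phi S hne h β hσ x := by
  funext i
  rw [permMatrixT_mulVec]
  unfold Phi
  have hy : ∀ j, (∑ k : Fin (K + 1),
      h k • (((σ.permMatrix ℝ)ᵀ * S * (σ.permMatrix ℝ)) ^ (k : ℕ)
        *ᵥ ((σ.permMatrix ℝ)ᵀ *ᵥ x))) j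
      = (∑ k : Fin (K + 1), h k • (S ^ (k : ℕ) *ᵥ x)) (σ⁻¹ j) := by
    intro j
    simp only [Finset.sum_apply, Pi.smul_apply, smul_eq_mul, permConj_pow_mulVec]
  congr 1
  · rw [hy]
  · apply Finset.sum_congr rfl
    intro k _
    congr 1
    have hmem : ∀ j, j ∈ (nbhd S (σ⁻¹ i)).image σ ↔
        j ∈ nbhd ((σ.permMatrix ℝ)ᵀ * S * (σ.permMatrix ℝ)) i := by
      intro j; rw [nbhd_conj]
    rw [Finset.sup'_congr (hne' i) (Finset.ext fun j => (hmem j)).symm (fun _ _ => rfl)]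
    rw [Finset.sup'_image]
    apply Finset.sup'_congr _ rfl
    intro j _
    have : (∑ k' : Fin (K + 1),
        h k' • (((σ.permMatrix ℝ)ᵀ * S * (σ.permMatrix ℝ)) ^ (k' : ℕ)
          *ᵥ ((σ.permMatrix ℝ)ᵀ *ᵥ x)))
        = (σ.permMatrix ℝ)ᵀ *ᵥ (∑ k' : Fin (K + 1), h k' • (S ^ (k' : ℕ) *ᵥ x)) := by
      funext j'; rw [hy, permMatrixT_mulVec]
    simp only [Function.comp_apply]
    rw [this, permConj_pow_mulVec]
    simp
end
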